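/- Let c ∈ ℝ, T > 0, and α : ℝ → ℝ be T-periodic and essentially bounded with α(t) ≫ 0 (i.e., α(t) ≥ 0 a.e. and α(t) > 0 on a positive-measure set) and α(t) ≪ (2π)²/T² + c²/4. Then x'' + c x' + α(t) x = 0 has no nontrivial T-periodic solution. -/

import Mathlib

open Real MeasureTheory Set ENNReal


lemma contLe_of_ae {f g : ℝ → ℝ} (hf : Continuous f) (hg : Continuous g) {s : Set ℝ}
    (hs : IsOpen s) (h : ∀ᵐ t ∂(volume : Measure ℝ), t ∈ s → f t ≤ g t) :
    ∀ t ∈ s, f t ≤ g t := by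
  intro t ht
  by_contra hlt
  push_neg at hlt
  have hUopen : IsOpen (s ∩ {u | g u < f u}) := hs.inter (isOpen_lt hg hf)
  have hpos := hUopen.measure_pos volume ⟨t, ht, hlt⟩
  have hnull : volume (s ∩ {u | g u < f u}) = 0 := by
    refine measure_mono_null ?_ (ae_iff.mp h)
    intro u hu
    simp only [mem_setOf_eq, Classical.not_imp]
    exact ⟨hu.1, not_le.2 hu.2⟩
  exact hpos.ne' hnull

lemma window {S : Set ℝ} {T a : ℝ} (hS : ∀ t, t ∈ S → t + T ∈ S) (ha : 0 ≤ a) (haT : a ≤ T)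
    (h : 0 < volume (S ∩ Icc 0 T)) : 0 < volume (S ∩ Icc a (a + T)) := by
  have hsplit : S ∩ Icc 0 T ⊆ (S ∩ Icc 0 a) ∪ (S ∩ Icc a T) := by
    intro u ⟨huS, hu0, huT⟩
    rcases le_total u a with h' | h'
    · exact Or.inl ⟨huS, hu0, h'⟩
    · exact Or.inr ⟨huS, h', huT⟩
  have hsum := (measure_mono (μ := (volume : Measure ℝ)) hsplit).trans (measure_union_le _ _)
  rcases eq_or_lt_of_le ((zero_le : (0:ℝ≥0∞) ≤ volume (S ∩ Icc a T))) with h2 | h2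
  swap
  · refine h2.trans_le (measure_mono ?_)
    exact inter_subset_inter_right S (Icc_subset_Icc le_rfl (by linarith))
  rcases eq_or_lt_of_le ((zero_le : (0:ℝ≥0∞) ≤ volume (S ∩ Icc 0 a))) with h1 | h1
  · exfalso
    rw [← h1, ← h2, add_zero] at hsum
    exact h.not_ge hsum
  · have himg : (S ∩ Icc 0 a) ⊆ (fun u => u + T) ⁻¹' (S ∩ Icc a (a + T)) := by
      intro u ⟨huS, hu0, hua⟩
      refine ⟨hS u huS, ?_, ?_⟩
      · show a ≤ u + T; linarith
      · show u + T ≤ a + T; linarith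
    calc 0 < volume (S ∩ Icc 0 a) := h1
      _ ≤ volume ((fun u => u + T) ⁻¹' (S ∩ Icc a (a + T))) := measure_mono himg
      _ = volume (S ∩ Icc a (a + T)) := measure_preimage_add_right volume T _

lemma cd_facts {x : ℝ → ℝ} (hx : ContDiff ℝ 2 x) :
    Differentiable ℝ x ∧ Differentiable ℝ (deriv x) ∧ Continuous (deriv (deriv x)) := by
  rw [show (2 : WithTop ℕ∞) = 1 + 1 from rfl, contDiff_succ_iff_deriv] at hx
  rw [contDiff_one_iff_deriv] at hx
  exact ⟨hx.1, hx.2.2.1, hx.2.2.2⟩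

lemma uniq {c C : ℝ} {α x : ℝ → ℝ} (hx : ContDiff ℝ 2 x)
    (hode : ∀ᵐ t ∂(volume : Measure ℝ),
      deriv (deriv x) t + c * deriv x t + α t * x t = 0)
    (hbdd : ∀ᵐ t ∂(volume : Measure ℝ), |α t| ≤ C) {r : ℝ}
    (hr : x r = 0) (hr' : deriv x r = 0) : ∀ t, x t = 0 := by
  obtain ⟨hdx, hdx', hcx''⟩ := cd_facts hx
  set C' := max C 0 with hC'
  set K := 2 * |c| + C' + 1 with hK
  set E := fun t => deriv x t * deriv x t + x t * x t with hE
  set dE := fun t => (deriv (deriv x) t * deriv x t + deriv x t * deriv (deriv x) t)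
      + (deriv x t * x t + x t * deriv x t) with hdE
  have hEd : ∀ t, HasDerivAt E (dE t) t := fun t =>
    (((hdx' t).hasDerivAt.mul (hdx' t).hasDerivAt).add
      (((hdx t).hasDerivAt.mul (hdx t).hasDerivAt)))
  have hEnn : ∀ t, 0 ≤ E t := fun t => add_nonneg (mul_self_nonneg _) (mul_self_nonneg _)
  have hcE : Continuous E := (hdx'.continuous.mul hdx'.continuous).add
    (hdx.continuous.mul hdx.continuous)
  have hcdE : Continuous dE := ((hcx''.mul hdx'.continuous).add
    (hdx'.continuous.mul hcx'')).add ((hdx'.continuous.mul hdx.continuous).add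
    (hdx.continuous.mul hdx'.continuous))
  have key : ∀ t, (dE t ≤ K * E t ∧ -(K * E t) ≤ dE t) := by
    have hae : ∀ᵐ t ∂(volume : Measure ℝ),
        t ∈ (univ : Set ℝ) → dE t ≤ K * E t ∧ -(K * E t) ≤ dE t := by
      filter_upwards [hode, hbdd] with t h1 h2 _
      have hxx : deriv (deriv x) t = -(c * deriv x t + α t * x t) := by linarith
      have ha1 : α t ≤ C' := le_trans (le_trans (le_abs_self _) h2) (le_max_left _ _)
      have ha2 : -C' ≤ α t := by
        have := neg_abs_le (α t); have : -C ≤ α t := by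
          have := h2; cases abs_le.mp h2; linarith
        have hCC : C ≤ C' := le_max_left _ _; linarith
      have hc1 : c ≤ |c| := le_abs_self c
      have hc2 : -|c| ≤ c := neg_abs_le c
      constructor
      · simp only [hdE, hE, hK, hxx]
        nlinarith [mul_nonneg (sub_nonneg.2 ha1) (sq_nonneg (x t - deriv x t)),
          mul_nonneg (sub_nonneg.2 (neg_le.mp ha2 : -α t ≤ C')) (sq_nonneg (x t + deriv x t)),
          mul_nonneg (by linarith : (0:ℝ) ≤ |c| - c) (sq_nonneg (deriv x t)),
          sq_nonneg (x t - deriv x t), sq_nonneg (x t + deriv x t)]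
      · simp only [hdE, hE, hK, hxx]
        nlinarith [mul_nonneg (sub_nonneg.2 ha1) (sq_nonneg (x t + deriv x t)),
          mul_nonneg (sub_nonneg.2 (neg_le.mp ha2 : -α t ≤ C')) (sq_nonneg (x t - deriv x t)),
          mul_nonneg (by linarith : (0:ℝ) ≤ |c| + c) (sq_nonneg (deriv x t)),
          sq_nonneg (x t - deriv x t), sq_nonneg (x t + deriv x t)]
    have k1 := contLe_of_ae hcdE (continuous_const.mul hcE) isOpen_univ
      (hae.mono fun t h ht => (h ht).1)
    have k2 := contLe_of_ae ((continuous_const.mul hcE).neg) hcdE isOpen_univ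
      (hae.mono fun t h ht => (h ht).2)
    exact fun t => ⟨k1 t (mem_univ t), k2 t (mem_univ t)⟩
  have hEr : E r = 0 := by simp [hE, hr, hr']
  have main : ∀ t, E t = 0 := by
    intro t
    rcases le_total r t with hrt | hrt
    · set F := fun u => E u * exp (-K * u) with hF
      have hFd : ∀ u, HasDerivAt F (dE u * exp (-K * u) + E u * (-K * exp (-K * u))) u := by
        intro u
        have h1 : HasDerivAt (fun u : ℝ => exp (-K * u)) (-K * exp (-K * u)) u := by
          simpa [mul_comm] using ((hasDerivAt_id u).const_mul (-K)).exp
        exact (hEd u).mul h1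
      have hF' : ∀ u, deriv F u ≤ 0 := by
        intro u
        rw [(hFd u).deriv]
        have h1 := (key u).1
        have h2 := exp_pos (-K * u)
        nlinarith [h2.le]
      have hanti : Antitone F := antitone_of_deriv_nonpos
        (fun u => (hFd u).differentiableAt) hF'
      have : F t ≤ 0 := by
        have := hanti hrt
        simpa [hF, hEr] using this
      have hEt : E t ≤ 0 := by
        have h2 := exp_pos (-K * t)
        have h3 : E t * exp (-K * t) ≤ 0 := this
        by_contra h
        push_neg at h
        nlinarith
      linarith [hEnn t, hEt]
    · set F := fun u => E u * exp (K * u) with hF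
      have hFd : ∀ u, HasDerivAt F (dE u * exp (K * u) + E u * (K * exp (K * u))) u := by
        intro u
        have h1 : HasDerivAt (fun u : ℝ => exp (K * u)) (K * exp (K * u)) u := by
          simpa [mul_comm] using ((hasDerivAt_id u).const_mul K).exp
        exact (hEd u).mul h1
      have hF' : ∀ u, 0 ≤ deriv F u := by
        intro u
        rw [(hFd u).deriv]
        have h1 := (key u).2
        have h2 := exp_pos (K * u)
        nlinarith [h2.le]
      have hmono : Monotone F := monotone_of_deriv_nonneg
        (fun u => (hFd u).differentiableAt) hF'
      have : F t ≤ 0 := by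
        have := hmono hrt
        simpa [hF, hEr] using this
      have hEt : E t ≤ 0 := by
        have h2 := exp_pos (K * t)
        have h3 : E t * exp (K * t) ≤ 0 := this
        by_contra h
        push_neg at h
        nlinarith
      linarith [hEnn t, hEt]
  intro t
  have := main t
  simp only [hE] at this
  nlinarith [mul_self_nonneg (deriv x t), mul_self_nonneg (x t)]

lemma pos_deriv_local {x : ℝ → ℝ} (hcx' : Continuous (deriv x)) (hdx : Differentiable ℝ x)
    {p : ℝ} (hp : 0 < deriv x p) : ∃ δ > 0, StrictMonoOn x (Icc (p - δ) (p + δ)) := by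
  have hU : IsOpen {t : ℝ | 0 < deriv x t} := isOpen_lt continuous_const hcx'
  obtain ⟨ε, hε, hball⟩ := Metric.isOpen_iff.mp hU p hp
  refine ⟨ε / 2, by linarith, ?_⟩
  refine strictMonoOn_of_deriv_pos (convex_Icc _ _) hdx.continuous.continuousOn ?_
  intro t ht
  rw [interior_Icc, mem_Ioo] at ht
  refine hball ?_
  rw [Metric.mem_ball, Real.dist_eq, abs_lt]
  constructor <;> linarith [ht.1, ht.2]

lemma firstZero {x : ℝ → ℝ} (hcx' : Continuous (deriv x)) (hdx : Differentiable ℝ x)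
    {p q : ℝ} (hpq : p < q) (hxp : x p = 0) (hxq : x q = 0) (hp' : 0 < deriv x p) :
    ∃ b, b ∈ Ioc p q ∧ x b = 0 ∧ (∀ t ∈ Ioo p b, 0 < x t) ∧ deriv x b ≤ 0 := by
  obtain ⟨δ, hδ, hmono⟩ := pos_deriv_local hcx' hdx hp'
  set ε := min (δ/2) ((q - p)/2) with hε
  have hε0 : 0 < ε := lt_min (by linarith) (by linarith)
  have hεq : p + ε ≤ q := by
    have := min_le_right (δ/2) ((q-p)/2); have : ε ≤ (q-p)/2 := this; linarith
  have hpos1 : ∀ t ∈ Ioc p (p + ε), 0 < x t := by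
    intro t ⟨ht1, ht2⟩
    have h1 : x p < x t := by
      refine hmono ?_ ?_ ht1
      · constructor <;> [linarith; linarith]
      · have : ε ≤ δ/2 := min_le_left _ _
        constructor <;> linarith
    linarith [hxp ▸ h1]
  set S := {t : ℝ | x t = 0} ∩ Icc (p + ε) q with hS
  have hSclosed : IsClosed S :=
    (isClosed_singleton.preimage hdx.continuous).inter isClosed_Icc
  have hSne : S.Nonempty := ⟨q, hxq, hεq, le_rfl⟩
  have hSbdd : BddBelow S := ⟨p + ε, fun t ht => ht.2.1⟩
  set b := sInf S with hb
  have hbS : b ∈ S := hSclosed.csInf_mem hSne hSbdd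
  have hxb : x b = 0 := hbS.1
  have hbmem : b ∈ Icc (p + ε) q := hbS.2
  have hbp : p < b := lt_of_lt_of_le (by linarith) hbmem.1
  have hpos : ∀ t ∈ Ioo p b, 0 < x t := by
    intro t ⟨ht1, ht2⟩
    rcases le_or_gt t (p + ε) with h | h
    · exact hpos1 t ⟨ht1, h⟩
    · by_contra hneg
      push_neg at hneg
      have hx1 : 0 < x (p + ε) := hpos1 (p + ε) ⟨by linarith, le_rfl⟩
      have hivt : (0:ℝ) ∈ x '' Icc (p + ε) t := by
        apply intermediate_value_Icc' h.le hdx.continuous.continuousOn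
        exact ⟨hneg, hx1.le⟩
      obtain ⟨z, hz, hz0⟩ := hivt
      have hzS : z ∈ S := ⟨hz0, hz.1, by linarith [hz.2, hbmem.2]⟩
      have := csInf_le hSbdd hzS
      linarith [hz.2]
  refine ⟨b, ⟨hbp, hbmem.2⟩, hxb, hpos, ?_⟩
  by_contra hb'
  push_neg at hb'
  obtain ⟨δ', hδ', hmono'⟩ := pos_deriv_local hcx' hdx hb'
  set t := max (b - δ') ((p + b)/2) with ht
  have htb : t < b := max_lt (by linarith) (by linarith)
  have htp : p < t := lt_of_lt_of_le (by linarith) (le_max_right _ _)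
  have h1 : x t < x b := by
    refine hmono' ?_ ?_ htb
    · exact ⟨le_max_left _ _, by linarith⟩
    · constructor <;> linarith [le_max_left (b - δ') ((p+b)/2)]
  have := hpos t ⟨htp, htb⟩
  linarith [hxb ▸ h1]

lemma sturm {c ω : ℝ} (hω : 0 < ω) {α x : ℝ → ℝ}
    (hub : ∀ᵐ t ∂(volume : Measure ℝ), α t ≤ ω ^ 2 + c ^ 2 / 4)
    (hode : ∀ᵐ t ∂(volume : Measure ℝ),
      deriv (deriv x) t + c * deriv x t + α t * x t = 0)
    (hx : ContDiff ℝ 2 x) {a b : ℝ} (hab : a < b) (hxa : x a = 0) (hxb : x b = 0)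
    (hpos : ∀ t ∈ Ioo a b, 0 < x t) (hxb' : deriv x b < 0) (hlen : b - a ≤ π / ω) :
    b - a = π / ω ∧ ∀ᵐ t ∂(volume : Measure ℝ), t ∈ Ioo a b → α t = ω ^ 2 + c ^ 2 / 4 := by
  obtain ⟨hdx, hdx', hcx''⟩ := cd_facts hx
  set y := fun t => exp (c/2 * t) * x t with hy
  set Y1 := fun t => c/2 * exp (c/2 * t) * x t + exp (c/2 * t) * deriv x t with hY1
  set Y2 := fun t => exp (c/2 * t) *
      (deriv (deriv x) t + c * deriv x t + c ^ 2 / 4 * x t) with hY2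
  have hexp : ∀ t : ℝ, HasDerivAt (fun t => exp (c/2 * t)) (c/2 * exp (c/2 * t)) t := by
    intro t
    simpa [mul_comm] using ((hasDerivAt_id t).const_mul (c/2)).exp
  have hyder : ∀ t, HasDerivAt y (Y1 t) t := fun t => (hexp t).mul (hdx t).hasDerivAt
  have hY1der : ∀ t, HasDerivAt Y1 (Y2 t) t := by
    intro t
    have h1 : HasDerivAt (fun t => c/2 * exp (c/2 * t) * x t)
        (c/2 * (c/2 * exp (c/2 * t)) * x t + c/2 * exp (c/2 * t) * deriv x t) t :=
      ((hexp t).const_mul (c/2)).mul (hdx t).hasDerivAt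
    have h2 : HasDerivAt (fun t => exp (c/2 * t) * deriv x t)
        (c/2 * exp (c/2 * t) * deriv x t + exp (c/2 * t) * deriv (deriv x) t) t :=
      (hexp t).mul (hdx' t).hasDerivAt
    have := h1.add h2
    refine this.congr_deriv ?_
    ring
  set φ := fun t => sin (ω * (t - a)) with hφ
  set φ' := fun t => ω * cos (ω * (t - a)) with hφ'
  have hφder : ∀ t, HasDerivAt φ (φ' t) t := by
    intro t
    have := (((hasDerivAt_id t).sub_const a).const_mul ω).sin
    refine this.congr_deriv ?_
    simp [hφ']; ring
  have hφ'der : ∀ t, HasDerivAt φ' (-(ω ^ 2 * φ t)) t := by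
    intro t
    have := ((((hasDerivAt_id t).sub_const a).const_mul ω).cos).const_mul ω
    refine this.congr_deriv ?_
    simp [hφ]; ring
  set w := fun t => Y1 t * φ t - y t * φ' t with hw
  set W := fun t => Y2 t * φ t + ω ^ 2 * φ t * y t with hW
  have hwder : ∀ t, HasDerivAt w (W t) t := by
    intro t
    have := ((hY1der t).mul (hφder t)).sub ((hyder t).mul (hφ'der t))
    refine this.congr_deriv ?_
    simp only [hW]
    ring
  have hcex : Continuous fun t : ℝ => exp (c/2 * t) :=
    (continuous_const.mul continuous_id).rexp
  have hcy : Continuous y := hcex.mul hdx.continuous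
  have hcY1 : Continuous Y1 :=
    ((continuous_const.mul hcex).mul hdx.continuous).add (hcex.mul hdx'.continuous)
  have hcY2 : Continuous Y2 := hcex.mul ((hcx''.add
    (continuous_const.mul hdx'.continuous)).add (continuous_const.mul hdx.continuous))
  have hcφ : Continuous φ := Real.continuous_sin.comp (continuous_const.mul (continuous_id.sub continuous_const))
  have hcφ' : Continuous φ' := continuous_const.mul
    (Real.continuous_cos.comp (continuous_const.mul (continuous_id.sub continuous_const)))
  have hcW : Continuous W := (hcY2.mul hcφ).add ((continuous_const.mul hcφ).mul hcy)
  have hwcont : Continuous w := (hcY1.mul hcφ).sub (hcy.mul hcφ')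
  -- key factorization under the ODE
  have hfact : ∀ᵐ t ∂(volume : Measure ℝ), t ∈ Ioo a b →
      W t = (ω ^ 2 + c ^ 2 / 4 - α t) * (φ t * (exp (c/2 * t) * x t)) := by
    filter_upwards [hode] with t hodet _
    have hxx : deriv (deriv x) t + c * deriv x t + c ^ 2 / 4 * x t
        = (c ^ 2 / 4 - α t) * x t := by linarith
    simp only [hW, hY2, hy, hxx]
    ring
  have hφnn : ∀ t ∈ Ioo a b, 0 ≤ φ t := by
    intro t ⟨ht1, ht2⟩
    apply sin_nonneg_of_nonneg_of_le_pi
    · nlinarith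
    · have h1 : ω * (t - a) < ω * (b - a) := by nlinarith
      have h2 : ω * (b - a) ≤ π := by
        have := (le_div_iff₀ hω).mp hlen
        nlinarith
      linarith
  have hWnn : ∀ t ∈ Ioo a b, 0 ≤ W t := by
    have := contLe_of_ae (f := fun _ : ℝ => (0:ℝ)) (g := W) (s := Ioo a b) continuous_const hcW isOpen_Ioo ?_
    · exact this
    · filter_upwards [hfact, hub] with t h1 h2 ht
      rw [h1 ht]
      have h3 := hφnn t ht
      have h4 := hpos t ht
      have h5 := exp_pos (c/2 * t)
      apply mul_nonneg (by linarith)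
      exact mul_nonneg h3 (by positivity)
  have hwmono : MonotoneOn w (Icc a b) := by
    apply monotoneOn_of_deriv_nonneg (convex_Icc a b) hwcont.continuousOn
      (fun t _ => (hwder t).differentiableAt.differentiableWithinAt)
    intro t ht
    rw [interior_Icc] at ht
    rw [(hwder t).deriv]
    exact hWnn t ht
  have hwa : w a = 0 := by
    simp [hw, hφ, hφ', hy, hxa]
  have hwb : w b = Y1 b * φ b := by simp [hw, hy, hxb]
  have hY1b : Y1 b < 0 := by
    have h : Y1 b = exp (c/2 * b) * deriv x b := by simp [hY1, hxb]
    rw [h]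
    exact mul_neg_of_pos_of_neg (exp_pos _) hxb'
  have hbaeq : b - a = π / ω := by
    rcases lt_or_eq_of_le hlen with hlt | heq
    · exfalso
      have hφb : 0 < φ b := by
        apply sin_pos_of_pos_of_lt_pi
        · nlinarith
        · have := (lt_div_iff₀ hω).mp hlt
          nlinarith
      have h1 : w a ≤ w b := hwmono (left_mem_Icc.2 hab.le) (right_mem_Icc.2 hab.le) hab.le
      rw [hwa, hwb] at h1
      nlinarith
    · exact heq
  refine ⟨hbaeq, ?_⟩
  have hωπ : ω * (b - a) = π := by rw [hbaeq]; field_simp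
  have hφb0 : φ b = 0 := by
    simp only [hφ]
    rw [hωπ, sin_pi]
  have hwb0 : w b = 0 := by rw [hwb, hφb0, mul_zero]
  have hwzero : ∀ t ∈ Icc a b, w t = 0 := by
    intro t ht
    have h1 := hwmono (left_mem_Icc.2 hab.le) ht ht.1
    have h2 := hwmono ht (right_mem_Icc.2 hab.le) ht.2
    rw [hwa] at h1; rw [hwb0] at h2; linarith
  have hW0 : ∀ t ∈ Ioo a b, W t = 0 := by
    intro t ht
    have hne : w =ᶠ[nhds t] (fun _ => (0:ℝ)) := by
      filter_upwards [isOpen_Ioo.mem_nhds ht] with u hu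
      exact hwzero u (Ioo_subset_Icc_self hu)
    have h := hne.deriv_eq
    rw [(hwder t).deriv] at h
    simpa using h
  filter_upwards [hfact, hub] with t h1 h2 ht
  have h3 := hW0 t ht
  rw [h1 ht] at h3
  have hφt : 0 < φ t := by
    apply sin_pos_of_pos_of_lt_pi
    · nlinarith [ht.1, ht.2]
    · have hlt : ω * (t - a) < ω * (b - a) := by nlinarith [ht.2]
      linarith [hωπ]
  have hxt := hpos t ht
  have het := exp_pos (c/2 * t)
  rcases mul_eq_zero.mp h3 with h | h
  · linarith
  · exact absurd h (ne_of_gt (mul_pos hφt (mul_pos het hxt)))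

lemma deriv_periodic {x : ℝ → ℝ} {T : ℝ} (hxper : Function.Periodic x T) :
    Function.Periodic (deriv x) T := by
  intro t
  have h1 : (fun s => x (s + T)) = x := funext fun s => hxper s
  calc deriv x (t + T) = deriv (fun s => x (s + T)) t := (deriv_comp_add_const x T t).symm
    _ = deriv x t := by rw [h1]

lemma global_max {x : ℝ → ℝ} {T : ℝ} (hT : 0 < T) (hxper : Function.Periodic x T)
    (hcx : Continuous x) : ∃ s ∈ Icc 0 T, (∀ u, x u ≤ x s) := by
  obtain ⟨s, hs, hmax⟩ := isCompact_Icc.exists_isMaxOn (nonempty_Icc.2 hT.le)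
    hcx.continuousOn
  refine ⟨s, hs, fun u => ?_⟩
  have h1 : T * Int.fract (u / T) = u - ⌊u / T⌋ * T := by
    rw [Int.fract]
    field_simp
  have h2 : T * Int.fract (u / T) ∈ Icc (0:ℝ) T := by
    constructor
    · exact mul_nonneg hT.le (Int.fract_nonneg _)
    · nlinarith [Int.fract_lt_one (u / T)]
  have h3 : x (T * Int.fract (u / T)) = x u := by
    rw [h1]
    exact hxper.sub_int_mul_eq ⌊u / T⌋
  rw [← h3]
  exact hmax h2

lemma noZero {c T : ℝ} (hT : 0 < T) {α x : ℝ → ℝ}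
    (hper : Function.Periodic α T)
    (hlb : ∀ᵐ t ∂(volume : Measure ℝ), 0 ≤ α t)
    (hlbstrict : 0 < volume {t ∈ Icc (0:ℝ) T | 0 < α t})
    (hode : ∀ᵐ t ∂(volume : Measure ℝ),
      deriv (deriv x) t + c * deriv x t + α t * x t = 0)
    (hx : ContDiff ℝ 2 x) (hxper : Function.Periodic x T)
    (hpos : ∀ t, 0 < x t) : False := by
  obtain ⟨hdx, hdx', hcx''⟩ := cd_facts hx
  obtain ⟨s, hs, hmax⟩ := global_max hT hxper hdx.continuous
  have hds : deriv x s = 0 := by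
    have : IsLocalMax x s := Filter.Eventually.of_forall fun u => hmax u
    exact this.deriv_eq_zero
  set g := fun t => exp (c * t) * deriv x t with hg
  set dg := fun t => exp (c * t) * (deriv (deriv x) t + c * deriv x t) with hdg
  have hexp : ∀ t : ℝ, HasDerivAt (fun t => exp (c * t)) (c * exp (c * t)) t := by
    intro t
    simpa [mul_comm] using ((hasDerivAt_id t).const_mul c).exp
  have hgder : ∀ t, HasDerivAt g (dg t) t := by
    intro t
    have := (hexp t).mul (hdx' t).hasDerivAt
    refine this.congr_deriv ?_
    simp only [hdg]
    ring
  have hcexp : Continuous fun t : ℝ => exp (c * t) :=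
    Real.continuous_exp.comp (continuous_const.mul continuous_id)
  have hcdg : Continuous dg := hcexp.mul (hcx''.add (continuous_const.mul hdx'.continuous))
  have hdgle : ∀ t, dg t ≤ 0 := by
    have := contLe_of_ae (f := dg) (g := fun _ => (0:ℝ)) (s := univ) hcdg continuous_const
      isOpen_univ ?_
    · exact fun t => this t (mem_univ t)
    · filter_upwards [hode, hlb] with t h1 h2 _
      have h3 : deriv (deriv x) t + c * deriv x t = -(α t * x t) := by linarith
      simp only [hdg, h3]
      have := mul_nonneg h2 (hpos t).le
      have he := exp_pos (c * t)
      nlinarith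
  have hint : ∫ t in s..(s+T), dg t = 0 := by
    rw [intervalIntegral.integral_eq_sub_of_hasDerivAt (fun t _ => hgder t)
      (hcdg.intervalIntegrable _ _)]
    have h1 : deriv x (s + T) = deriv x s := deriv_periodic hxper s
    simp [hg, h1, hds]
  -- find a point where dg < 0
  set S := {t : ℝ | 0 < α t} with hSdef
  have hSper : ∀ t, t ∈ S → t + T ∈ S := by
    intro t ht
    simpa [hSdef, hper t] using ht
  have hS0 : 0 < volume (S ∩ Icc 0 T) := by
    have : {t ∈ Icc (0:ℝ) T | 0 < α t} = S ∩ Icc 0 T := by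
      ext u; simp [hSdef, and_comm]
    rwa [this] at hlbstrict
  have hwin := window hSper hs.1 hs.2 hS0
  set N := {t : ℝ | ¬ (deriv (deriv x) t + c * deriv x t + α t * x t = 0)} with hN
  have hNnull : volume N = 0 := ae_iff.mp hode
  have hAB : 0 < volume ((S ∩ Icc s (s+T)) \ N) := by
    rwa [measure_diff_null hNnull]
  obtain ⟨t0, ht0⟩ := nonempty_of_measure_ne_zero hAB.ne'
  have ht0S : 0 < α t0 := ht0.1.1
  have ht0I : t0 ∈ Icc s (s+T) := ht0.1.2
  have ht0ode : deriv (deriv x) t0 + c * deriv x t0 + α t0 * x t0 = 0 := by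
    by_contra h
    exact ht0.2 h
  have hdgneg : dg t0 < 0 := by
    have h3 : deriv (deriv x) t0 + c * deriv x t0 = -(α t0 * x t0) := by linarith
    simp only [hdg, h3]
    have := mul_pos ht0S (hpos t0)
    have he := exp_pos (c * t0)
    nlinarith
  have hlt : ∫ t in s..(s+T), dg t < ∫ t in s..(s+T), (0:ℝ) := by
    apply intervalIntegral.integral_lt_integral_of_continuousOn_of_le_of_exists_lt
      (by linarith) hcdg.continuousOn continuousOn_const
      (fun t _ => hdgle t) ⟨t0, ht0I, hdgneg⟩
  simp only [intervalIntegral.integral_zero] at hlt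
  rw [hint] at hlt
  exact lt_irrefl 0 hlt
lemma ode_neg {c : ℝ} {α x : ℝ → ℝ}
    (hode : ∀ᵐ t ∂(volume : Measure ℝ),
      deriv (deriv x) t + c * deriv x t + α t * x t = 0) :
    ∀ᵐ t ∂(volume : Measure ℝ),
      deriv (deriv (fun s => -x s)) t + c * deriv (fun s => -x s) t
        + α t * (-x t) = 0 := by
  have h1 : (deriv fun s => -x s) = fun t => -deriv x t := deriv.neg'
  have h2 : deriv (deriv fun s => -x s) = fun t => -deriv (deriv x) t := by
    rw [h1]; exact deriv.neg'
  filter_upwards [hode] with t h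
  simp only [h1]
  rw [deriv.fun_neg]
  linarith

lemma key {c T : ℝ} (hT : 0 < T) {α x : ℝ → ℝ}
    (hper : Function.Periodic α T)
    (hbdd : ∃ C : ℝ, ∀ᵐ t ∂(volume : Measure ℝ), |α t| ≤ C)
    (hub : ∀ᵐ t ∂(volume : Measure ℝ), α t ≤ (2 * π) ^ 2 / T ^ 2 + c ^ 2 / 4)
    (hubstrict : 0 < volume {t ∈ Icc (0 : ℝ) T | α t < (2 * π) ^ 2 / T ^ 2 + c ^ 2 / 4})
    (hode : ∀ᵐ t ∂(volume : Measure ℝ),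
      deriv (deriv x) t + c * deriv x t + α t * x t = 0)
    (hx : ContDiff ℝ 2 x) (hxper : Function.Periodic x T)
    {a : ℝ} (ha : a ∈ Icc 0 T) (hxa : x a = 0) (ha' : 0 < deriv x a) : False := by
  obtain ⟨hdx, hdx', hcx''⟩ := cd_facts hx
  obtain ⟨C, hC⟩ := hbdd
  have hdxper := deriv_periodic hxper
  -- zeros are simple
  have hnz : ∀ r, x r = 0 → deriv x r ≠ 0 := by
    intro r h0 h1
    have h2 := uniq hx hode hC h0 h1
    have h3 : x = fun _ => 0 := funext h2
    rw [h3] at ha'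
    simp at ha'
  set ω := 2 * π / T with hωdef
  have hω : 0 < ω := by positivity
  have hbound : ω ^ 2 + c ^ 2 / 4 = (2 * π) ^ 2 / T ^ 2 + c ^ 2 / 4 := by
    rw [hωdef, div_pow]
  have hπω : π / ω = T / 2 := by
    rw [hωdef]
    field_simp
  have hub' : ∀ᵐ t ∂(volume : Measure ℝ), α t ≤ ω ^ 2 + c ^ 2 / 4 := by
    filter_upwards [hub] with t h
    rw [hbound]; exact h
  -- negated function
  set xn : ℝ → ℝ := fun s => -x s with hxn
  have hxncd : ContDiff ℝ 2 xn := hx.neg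
  have hd1 : deriv xn = fun t => -deriv x t := deriv.neg'
  have hdxn : Differentiable ℝ xn := hdx.neg
  have hcxn' : Continuous (deriv xn) := by rw [hd1]; exact hdx'.continuous.neg
  have hodeN := ode_neg (c := c) (α := α) (x := x) hode
  -- first zero b after a
  have hxaT : x (a + T) = 0 := by rw [hxper a]; exact hxa
  have hdaT : deriv x (a + T) = deriv x a := hdxper a
  obtain ⟨b, hbmem, hxb, hbpos, hb'le⟩ :=
    firstZero hdx'.continuous hdx (by linarith : a < a + T) hxa hxaT ha'
  have hb' : deriv x b < 0 := (hnz b hxb).lt_of_le hb'le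
  have hbne : b ≠ a + T := by
    intro h
    rw [h, hdaT] at hb'
    linarith
  have hblt : b < a + T := lt_of_le_of_ne hbmem.2 hbne
  -- first zero d of -x after b
  have hxnb : xn b = 0 := by simp [hxn, hxb]
  have hxnaT : xn (a + T) = 0 := by simp [hxn, hxaT]
  have hdnb : 0 < deriv xn b := by rw [hd1]; simpa using hb'
  obtain ⟨d, hdmem, hxnd, hdpos, hd'le⟩ :=
    firstZero hcxn' hdxn hblt hxnb hxnaT hdnb
  have hxd : x d = 0 := by
    have : -x d = 0 := hxnd
    linarith
  have hd'lt : deriv xn d < 0 := by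
    refine lt_of_le_of_ne hd'le ?_
    rw [hd1]
    simpa using (hnz d hxd)
  -- Sturm comparisons
  rcases le_or_gt (b - a) (π / ω) with hL1 | hL1
  · obtain ⟨hEq1, hAe1⟩ := sturm hω hub' hode hx hbmem.1 hxa hxb hbpos hb' hL1
    rcases le_or_gt (d - b) (π / ω) with hL2 | hL2
    · obtain ⟨hEq2, hAe2⟩ := sturm hω hub' hodeN hxncd hdmem.1 hxnb hxnd hdpos hd'lt hL2
      -- d = a + T
      have hdaT' : d = a + T := by
        have h1 := hdmem.2
        rw [hπω] at hEq1 hEq2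
        linarith
      -- contradiction with hubstrict via window
      set bound := (2 * π) ^ 2 / T ^ 2 + c ^ 2 / 4 with hbd
      set Sd := {t : ℝ | α t < bound} with hSd
      have hSdper : ∀ t, t ∈ Sd → t + T ∈ Sd := by
        intro t ht
        simpa [hSd, hper t] using ht
      have hS0 : 0 < volume (Sd ∩ Icc 0 T) := by
        have : {t ∈ Icc (0:ℝ) T | α t < bound} = Sd ∩ Icc 0 T := by
          ext u; simp [hSd, and_comm]
        rwa [this] at hubstrict
      have hwin := window hSdper ha.1 ha.2 hS0
      set N1 := {t : ℝ | ¬ (t ∈ Ioo a b → α t = ω ^ 2 + c ^ 2 / 4)} with hN1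
      set N2 := {t : ℝ | ¬ (t ∈ Ioo b d → α t = ω ^ 2 + c ^ 2 / 4)} with hN2
      have hN1null : volume N1 = 0 := ae_iff.mp hAe1
      have hN2null : volume N2 = 0 := ae_iff.mp hAe2
      have hsub : Sd ∩ Icc a (a + T) ⊆ N1 ∪ N2 ∪ ({a, b, a + T} : Set ℝ) := by
        intro t ⟨htS, ht1, ht2⟩
        by_contra hcon
        simp only [mem_union, not_or] at hcon
        obtain ⟨⟨hn1, hn2⟩, hn3⟩ := hcon
        simp only [hN1, mem_setOf_eq, Classical.not_not] at hn1
        simp only [hN2, mem_setOf_eq, Classical.not_not] at hn2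
        simp only [mem_insert_iff, mem_singleton_iff, not_or] at hn3
        obtain ⟨hta, htb, htaT⟩ := hn3
        have htval : α t = ω ^ 2 + c ^ 2 / 4 := by
          rcases lt_trichotomy t b with h | h | h
          · exact hn1 ⟨lt_of_le_of_ne ht1 (Ne.symm hta), h⟩
          · exact absurd h htb
          · refine hn2 ⟨h, ?_⟩
            rw [hdaT']
            exact lt_of_le_of_ne ht2 htaT
        have h5 : α t < bound := htS
        rw [← hbound, htval] at h5
        exact lt_irrefl _ h5
      have hnull : volume (N1 ∪ N2 ∪ ({a, b, a + T} : Set ℝ)) = 0 := by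
        rw [measure_union_null_iff]
        constructor
        · rw [measure_union_null_iff]; exact ⟨hN1null, hN2null⟩
        · exact measure_mono_null (by intro u hu; exact hu)
            (Set.Finite.measure_zero (by simp : ({a, b, a + T} : Set ℝ).Finite) volume)
      exact hwin.ne' (measure_mono_null hsub hnull)
    · -- d - b > π/ω : contradiction with d ≤ a+T
      rw [hπω] at hEq1 hL2
      have := hdmem.2
      linarith
  · -- b - a > π/ω
    rcases le_or_gt (d - b) (π / ω) with hL2 | hL2
    · obtain ⟨hEq2, _⟩ := sturm hω hub' hodeN hxncd hdmem.1 hxnb hxnd hdpos hd'lt hL2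
      rw [hπω] at hEq2 hL1
      have := hdmem.2
      linarith
    · rw [hπω] at hL1 hL2
      have := hdmem.2
      linarith

/-- If `α` is `T`-periodic, essentially bounded, `0 ≪ α ≪ (2π)²/T² + c²/4`, then
`x'' + c x' + α x = 0` has no nontrivial `T`-periodic solution. -/
theorem stmt3 (c T : ℝ) (hT : 0 < T) (α : ℝ → ℝ) (hmeas : Measurable α)
    (hper : Function.Periodic α T)
    (hbdd : ∃ C : ℝ, ∀ᵐ t ∂(volume : Measure ℝ), |α t| ≤ C)
    (hlb : ∀ᵐ t ∂(volume : Measure ℝ), 0 ≤ α t)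
    (hlbstrict : 0 < volume {t ∈ Icc (0 : ℝ) T | 0 < α t})
    (hub : ∀ᵐ t ∂(volume : Measure ℝ), α t ≤ (2 * π) ^ 2 / T ^ 2 + c ^ 2 / 4)
    (hubstrict : 0 < volume {t ∈ Icc (0 : ℝ) T | α t < (2 * π) ^ 2 / T ^ 2 + c ^ 2 / 4})
    (x : ℝ → ℝ) (hx : ContDiff ℝ 2 x) (hxper : Function.Periodic x T)
    (hode : ∀ᵐ t ∂(volume : Measure ℝ),
      deriv (deriv x) t + c * deriv x t + α t * x t = 0) :
    ∀ t, x t = 0 := by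
  by_contra hcon
  push_neg at hcon
  obtain ⟨t0, ht0⟩ := hcon
  obtain ⟨hdx, hdx', hcx''⟩ := cd_facts hx
  obtain ⟨C, hC⟩ := hbdd
  -- facts about the negated solution
  set xn : ℝ → ℝ := fun s => -x s with hxn
  have hxncd : ContDiff ℝ 2 xn := hx.neg
  have hxnper : Function.Periodic xn T := fun t => by simp [hxn, hxper t]
  have hodeN := ode_neg (c := c) (α := α) (x := x) hode
  by_cases hzero : ∃ r, x r = 0
  · obtain ⟨r, hr⟩ := hzero
    -- move the zero into [0, T]
    set a := T * Int.fract (r / T) with hadef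
    have h1 : T * Int.fract (r / T) = r - ⌊r / T⌋ * T := by
      rw [Int.fract]
      field_simp
    have ha : a ∈ Icc (0:ℝ) T := by
      constructor
      · exact mul_nonneg hT.le (Int.fract_nonneg _)
      · nlinarith [Int.fract_lt_one (r / T), Int.fract_nonneg (r / T)]
    have hxa : x a = 0 := by
      rw [hadef, h1, hxper.sub_int_mul_eq ⌊r / T⌋]
      exact hr
    have hda : deriv x a ≠ 0 := by
      intro h
      exact ht0 (uniq hx hode hC hxa h t0)
    rcases hda.lt_or_gt with h | h
    · -- apply key to -x
      have hxna : xn a = 0 := by simp [hxn, hxa]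
      have hd1 : deriv xn = fun t => -deriv x t := deriv.neg'
      have hda' : 0 < deriv xn a := by rw [hd1]; simpa using h
      exact key hT hper ⟨C, hC⟩ hub hubstrict hodeN hxncd hxnper ha hxna hda'
    · exact key hT hper ⟨C, hC⟩ hub hubstrict hode hx hxper ha hxa h
  · push_neg at hzero
    -- x has constant sign
    rcases ht0.lt_or_gt with hneg | hpos
    · -- x t0 < 0, show x < 0 everywhere, apply noZero to -x
      have hall : ∀ t, 0 < xn t := by
        intro t
        simp only [hxn, neg_pos]
        by_contra hge
        push_neg at hge
        have hgt : 0 < x t := (hzero t).lt_of_le' hge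
        have : (0:ℝ) ∈ uIcc (x t0) (x t) := by
          rw [mem_uIcc]; left; exact ⟨hneg.le, hgt.le⟩
        obtain ⟨z, _, hz⟩ := intermediate_value_uIcc hdx.continuous.continuousOn this
        exact hzero z hz
      exact noZero hT hper hlb hlbstrict hodeN hxncd hxnper hall
    · have hall : ∀ t, 0 < x t := by
        intro t
        by_contra hge
        push_neg at hge
        have hlt : x t < 0 := (hzero t).lt_of_le hge
        have : (0:ℝ) ∈ uIcc (x t0) (x t) := by
          rw [mem_uIcc]; right; exact ⟨hlt.le, hpos.le⟩
        obtain ⟨z, _, hz⟩ := intermediate_value_uIcc hdx.continuous.continuousOn this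
        exact hzero z hz
      exact noZero hT hper hlb hlbstrict hode hx hxper hall
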